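/- arXiv:1111.1334 — 5 statements merged into one kernel-verified Lean document; each statement's English description precedes it below -/
import Mathlib

section
/- A symmetric bilinear form β on the hyperplane D* = {ξ ∈ ℝ^n : Σξ_i = 0} arises as β(ξ,η) = Σ_{i,j} ⟨r_i, r_j⟩ ξ_i η_j for some points r_1,...,r_n in some Euclidean space if and only if β is positive semidefinite. -/
open scoped RealInnerProductSpace
open Matrix

noncomputable def sumL (n : ℕ) : (Fin n → ℝ) →ₗ[ℝ] ℝ where
  toFun x := ∑ i, x i
  map_add' x y := by simp [Finset.sum_add_distrib]
  map_smul' c x := by simp [Finset.mul_sum]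

@[simp] lemma sumL_apply (n : ℕ) (x : Fin n → ℝ) : sumL n x = ∑ i, x i := rfl

lemma bilin_expand {n N : ℕ} (β : (Fin n → ℝ) →ₗ[ℝ] (Fin n → ℝ) →ₗ[ℝ] ℝ)
    (w z : Fin N → (Fin n → ℝ)) (u v : Fin N → ℝ) :
    β (∑ k, u k • w k) (∑ l, v l • z l) = ∑ k, ∑ l, β (w k) (z l) * u k * v l := by
  have h1 : β (∑ k, u k • w k) = ∑ k, u k • β (w k) := by
    rw [map_sum]
    exact Finset.sum_congr rfl fun k _ => _root_.map_smul β _ _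
  rw [h1, LinearMap.sum_apply]
  refine Finset.sum_congr rfl fun k _ => ?_
  rw [LinearMap.smul_apply, map_sum, smul_eq_mul, Finset.mul_sum]
  refine Finset.sum_congr rfl fun l _ => ?_
  rw [_root_.map_smul, smul_eq_mul]
  ring

lemma eq_sum_single {n : ℕ} (x : Fin n → ℝ) :
    x = ∑ i, x i • (Pi.single i 1 : Fin n → ℝ) := by
  funext j
  rw [Finset.sum_apply]
  simp [Pi.single_apply, mul_ite, Finset.sum_ite_eq]

theorem stmt1 (n : ℕ) (β : (Fin n → ℝ) →ₗ[ℝ] (Fin n → ℝ) →ₗ[ℝ] ℝ)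
    (hsymm : ∀ ξ η, β ξ η = β η ξ) :
    (∃ d : ℕ, d ≤ n - 1 ∧ ∃ r : Fin n → EuclideanSpace ℝ (Fin d),
        ∀ ξ η : Fin n → ℝ, (∑ i, ξ i = 0) → (∑ i, η i = 0) →
          β ξ η = ∑ i, ∑ j, ⟪r i, r j⟫ * ξ i * η j) ↔
      (∀ ξ : Fin n → ℝ, (∑ i, ξ i = 0) → 0 ≤ β ξ ξ) := by
  constructor
  · rintro ⟨d, -, r, hr⟩ ξ hξ
    rw [hr ξ ξ hξ hξ]
    have h : ⟪∑ i, ξ i • r i, ∑ j, ξ j • r j⟫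
        = ∑ i, ∑ j, ⟪r i, r j⟫ * ξ i * ξ j := by
      rw [sum_inner]
      refine Finset.sum_congr rfl fun i _ => ?_
      rw [inner_sum]
      refine Finset.sum_congr rfl fun j _ => ?_
      rw [real_inner_smul_left, real_inner_smul_right]; ring
    rw [← h]
    exact real_inner_self_nonneg
  · intro hpos
    classical
    set V := LinearMap.ker (sumL n) with hV
    set Q : (Fin n → ℝ) →ₗ[ℝ] (Fin n → ℝ) :=
      LinearMap.id - (((n:ℝ)⁻¹ • sumL n).smulRight (fun _ => (1:ℝ))) with hQ
    have hmem : ∀ x : Fin n → ℝ, Q x ∈ V := by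
      intro x
      simp only [hV, hQ, LinearMap.mem_ker, LinearMap.sub_apply, LinearMap.id_apply,
        LinearMap.smulRight_apply, LinearMap.smul_apply, smul_eq_mul, sumL_apply]
      rcases Nat.eq_zero_or_pos n with h0 | h0
      · subst h0; simp
      · have hn : (n : ℝ) ≠ 0 := Nat.cast_ne_zero.mpr h0.ne'
        simp only [Pi.sub_apply, Pi.smul_apply, smul_eq_mul, mul_one,
          Finset.sum_sub_distrib, Finset.sum_const, Finset.card_univ,
          Fintype.card_fin, nsmul_eq_mul]
        field_simp
        ring
    set P : (Fin n → ℝ) →ₗ[ℝ] V := Q.codRestrict V hmem with hPdef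
    have hPfix : ∀ x : Fin n → ℝ, (∑ i, x i) = 0 → ((P x : Fin n → ℝ)) = x := by
      intro x hx
      have : (P x : Fin n → ℝ) = Q x := rfl
      rw [this, hQ]
      simp [hx]
    set m := Module.finrank ℝ V with hm
    have hmn : m ≤ n - 1 := by
      rcases Nat.eq_zero_or_pos n with h0 | h0
      · subst h0
        have h1 := Submodule.finrank_le V
        rw [Module.finrank_fin_fun] at h1
        omega
      · have hne : V ≠ ⊤ := by
          intro htop
          have h1 : (fun _ => (1:ℝ) : Fin n → ℝ) ∈ V := htop ▸ Submodule.mem_top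
          simp only [hV, LinearMap.mem_ker, sumL_apply] at h1
          simp only [Finset.sum_const, Finset.card_univ, Fintype.card_fin,
            nsmul_eq_mul, mul_one] at h1
          exact (Nat.cast_ne_zero.mpr h0.ne' : (n:ℝ) ≠ 0) h1
        have := Submodule.finrank_lt (K := ℝ) (V := Fin n → ℝ) hne
        rw [Module.finrank_fin_fun] at this
        omega
    set b : Module.Basis (Fin m) ℝ V := Module.finBasis ℝ V with hb
    set M : Matrix (Fin m) (Fin m) ℝ := fun k l => β (b k) (b l) with hM
    have key : ∀ u v : Fin m → ℝ,
        u ⬝ᵥ M *ᵥ v = β (↑(∑ k, u k • b k)) (↑(∑ l, v l • b l)) := by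
      intro u v
      push_cast
      rw [bilin_expand]
      simp only [dotProduct, Matrix.mulVec, dotProduct, hM]
      refine Finset.sum_congr rfl fun k _ => ?_
      rw [Finset.mul_sum]
      refine Finset.sum_congr rfl fun l _ => ?_
      ring
    have hpsd : M.PosSemidef := by
      refine Matrix.posSemidef_iff_dotProduct_mulVec.mpr ⟨?_, ?_⟩
      · ext k l
        rw [Matrix.conjTranspose_apply]
        exact (star_trivial _).trans (hsymm (b l) (b k))
      · intro u
        rw [key (star u) u]
        have hstar : star u = u := funext fun k => star_trivial _
        rw [hstar]
        refine hpos _ ?_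
        have hxV := LinearMap.mem_ker.mp (∑ k, u k • b k).2
        rw [sumL_apply] at hxV
        exact hxV
    obtain ⟨A, hA⟩ : ∃ A : Matrix (Fin m) (Fin m) ℝ, M = Aᴴ * A := by
      open scoped MatrixOrder in
      exact CStarAlgebra.nonneg_iff_eq_star_mul_self.mp hpsd.nonneg
    set W : (Fin n → ℝ) →ₗ[ℝ] (Fin n → ℝ) := V.subtype ∘ₗ P with hWdef
    have hW : ∀ x, W x = ↑(P x) := fun _ => rfl
    set c : Fin n → Fin m → ℝ := fun i => (b.repr (P (Pi.single i 1)) : Fin m → ℝ) with hc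
    refine ⟨m, hmn, fun i => ((WithLp.equiv 2 (Fin m → ℝ)).symm (A *ᵥ c i)), ?_⟩
    intro ξ η hξ hη
    have hinner : ∀ u v : Fin m → ℝ,
        ⟪(WithLp.equiv 2 (Fin m → ℝ)).symm (A *ᵥ u), (WithLp.equiv 2 (Fin m → ℝ)).symm (A *ᵥ v)⟫
          = u ⬝ᵥ M *ᵥ v := by
      intro u v
      rw [hA, Matrix.conjTranspose_eq_transpose_of_trivial, ← Matrix.mulVec_mulVec,
        Matrix.dotProduct_mulVec u, Matrix.vecMul_transpose]
      simp only [PiLp.inner_apply, RCLike.inner_apply, WithLp.equiv_symm_apply,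
        WithLp.ofLp_toLp, dotProduct, conj_trivial]
      exact Finset.sum_congr rfl fun _ _ => mul_comm _ _
    have hsum : ∀ k l, Aᵀ k l = star (A l k) := fun k l => rfl
    have hgram : ∀ i j : Fin n,
        ⟪(WithLp.equiv 2 (Fin m → ℝ)).symm (A *ᵥ c i), (WithLp.equiv 2 (Fin m → ℝ)).symm (A *ᵥ c j)⟫
          = β (↑(P (Pi.single i 1))) (↑(P (Pi.single j 1))) := by
      intro i j
      rw [hinner, key]
      rw [hc]
      rw [b.sum_repr, b.sum_repr]
    have hPexp : ∀ x : Fin n → ℝ,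
        W x = ∑ i, x i • W (Pi.single i 1) := by
      intro x
      conv_lhs => rw [eq_sum_single x]
      rw [map_sum]
      exact Finset.sum_congr rfl fun i _ => _root_.map_smul W _ _
    have hWfix : ∀ x : Fin n → ℝ, (∑ i, x i) = 0 → W x = x := by
      intro x hx; rw [hW]; exact hPfix x hx
    calc β ξ η = β (W ξ) (W η) := by rw [hWfix ξ hξ, hWfix η hη]
    _ = ∑ i, ∑ j, β (W (Pi.single i 1)) (W (Pi.single j 1)) * ξ i * η j := by
        rw [hPexp ξ, hPexp η, bilin_expand]
    _ = ∑ i, ∑ j, ⟪(WithLp.equiv 2 (Fin m → ℝ)).symm (A *ᵥ c i),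
          (WithLp.equiv 2 (Fin m → ℝ)).symm (A *ᵥ c j)⟫ * ξ i * η j := by
        refine Finset.sum_congr rfl fun i _ => Finset.sum_congr rfl fun j _ => ?_
        rw [hgram, hW, hW]
end

section
/- For the homogeneous potential U = Σ_{i<j} m_i m_j r_{ij}^{2κ} with κ = −1 (Jacobi–Banachiewicz potential), along any solution of the corresponding n-body equations the second derivative of the moment of inertia I satisfies Ï = 4H, where H = K/2 − U is the constant total energy; consequently G = 2IH − J², with J = İ/2, is a first integral. -/
open scoped RealInnerProductSpace

theorem pair_sum {n : ℕ} (f : Fin n → Fin n → ℝ) :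
    ∑ i, ∑ j ∈ Finset.univ.erase i, f i j
      = ∑ i, ∑ j ∈ Finset.univ.filter (fun j => i < j), (f i j + f j i) := by
  have h1 : ∀ i : Fin n, ∑ j ∈ Finset.univ.erase i, f i j
      = ∑ j ∈ Finset.univ.filter (fun j => j < i), f i j
        + ∑ j ∈ Finset.univ.filter (fun j => i < j), f i j := by
    intro i
    rw [← Finset.sum_filter_add_sum_filter_not (Finset.univ.erase i) (fun j => j < i)]
    congr 1
    · apply Finset.sum_congr _ fun _ _ => rfl
      ext j
      simp only [Finset.mem_filter, Finset.mem_erase, Finset.mem_univ, and_true, true_and]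
      constructor
      · rintro ⟨h, h2⟩; exact h2
      · intro h; exact ⟨ne_of_lt h, h⟩
    · apply Finset.sum_congr _ fun _ _ => rfl
      ext j
      simp only [Finset.mem_filter, Finset.mem_erase, Finset.mem_univ, and_true, true_and]
      constructor
      · rintro ⟨h, h2⟩; exact lt_of_le_of_ne (not_lt.mp h2) (Ne.symm h)
      · intro h; exact ⟨(ne_of_lt h).symm, not_lt.mpr (le_of_lt h)⟩
  simp only [h1, Finset.sum_add_distrib]
  rw [add_comm]
  congr 1
  rw [Finset.sum_comm' (t' := Finset.univ) (s' := fun j => Finset.univ.filter fun i => j < i)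
    (fun i j => by simp)]

theorem alg1 {E : Type*} [NormedAddCommGroup E] [InnerProductSpace ℝ E] {n : ℕ}
    (m : Fin n → ℝ) (x : Fin n → E) (hx : ∀ i j, i ≠ j → x i ≠ x j) :
    ∑ i, 2 * m i * ⟪x i, ∑ j ∈ Finset.univ.erase i, (2 * m j / ‖x i - x j‖ ^ 4) • (x j - x i)⟫
      = -4 * ∑ i, ∑ j ∈ Finset.univ.filter (fun j => i < j), m i * m j / ‖x i - x j‖ ^ 2 := by
  have step : ∀ i, 2 * m i * ⟪x i, ∑ j ∈ Finset.univ.erase i, (2 * m j / ‖x i - x j‖^4) • (x j - x i)⟫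
      = ∑ j ∈ Finset.univ.erase i, (2 * m i) * ((2 * m j / ‖x i - x j‖^4) * ⟪x i, x j - x i⟫) := by
    intro i
    rw [inner_sum, Finset.mul_sum]
    exact Finset.sum_congr rfl fun j _ => by rw [real_inner_smul_right]
  simp only [step]
  rw [pair_sum, Finset.mul_sum]
  refine Finset.sum_congr rfl fun i _ => ?_
  rw [Finset.mul_sum]
  refine Finset.sum_congr rfl fun j hj => ?_
  have hij : i < j := (Finset.mem_filter.mp hj).2
  have hd : ‖x i - x j‖ ≠ 0 := norm_ne_zero_iff.mpr (sub_ne_zero.mpr (hx i j (ne_of_lt hij)))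
  have hrev : ‖x j - x i‖ = ‖x i - x j‖ := norm_sub_rev _ _
  have hin : ⟪x i, x j - x i⟫ + ⟪x j, x i - x j⟫ = -‖x i - x j‖^2 := by
    rw [inner_sub_right, inner_sub_right, ← real_inner_self_eq_norm_sq, real_inner_sub_sub_self,
      real_inner_comm (x j) (x i)]
    ring
  rw [hrev]
  have h2 : ⟪x i, x j - x i⟫ = -‖x i - x j‖^2 - ⟪x j, x i - x j⟫ := by linarith
  rw [h2]
  field_simp
  ring

theorem alg2 {E : Type*} [NormedAddCommGroup E] [InnerProductSpace ℝ E] {n : ℕ}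
    (m : Fin n → ℝ) (x v : Fin n → E) (hx : ∀ i j, i ≠ j → x i ≠ x j) :
    ∑ i, m i * ⟪v i, ∑ j ∈ Finset.univ.erase i, (2 * m j / ‖x i - x j‖ ^ 4) • (x j - x i)⟫
      = ∑ i, ∑ j ∈ Finset.univ.filter (fun j => i < j),
          (0 * ⟪x i - x j, x i - x j⟫ - m i * m j * (⟪x i - x j, v i - v j⟫ + ⟪v i - v j, x i - x j⟫))
            / ⟪x i - x j, x i - x j⟫ ^ 2 := by
  have step : ∀ i, m i * ⟪v i, ∑ j ∈ Finset.univ.erase i, (2 * m j / ‖x i - x j‖^4) • (x j - x i)⟫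
      = ∑ j ∈ Finset.univ.erase i, (m i) * ((2 * m j / ‖x i - x j‖^4) * ⟪v i, x j - x i⟫) := by
    intro i
    rw [inner_sum, Finset.mul_sum]
    exact Finset.sum_congr rfl fun j _ => by rw [real_inner_smul_right]
  simp only [step]
  rw [pair_sum]
  refine Finset.sum_congr rfl fun i _ => ?_
  refine Finset.sum_congr rfl fun j hj => ?_
  have hij : i < j := (Finset.mem_filter.mp hj).2
  have hd : ‖x i - x j‖ ≠ 0 := norm_ne_zero_iff.mpr (sub_ne_zero.mpr (hx i j (ne_of_lt hij)))
  have hrev : ‖x j - x i‖ = ‖x i - x j‖ := norm_sub_rev _ _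
  have hq : ⟪x i - x j, x i - x j⟫ = ‖x i - x j‖^2 := real_inner_self_eq_norm_sq _
  rw [hrev, hq]
  have e1 : ⟪v i, x j - x i⟫ = -⟪x i - x j, v i⟫ := by
    rw [real_inner_comm, inner_sub_left]; rw [inner_sub_left]; ring
  have e2 : ⟪v j, x i - x j⟫ = ⟪x i - x j, v j⟫ := real_inner_comm _ _
  have e3 : ⟪x i - x j, v i - v j⟫ = ⟪x i - x j, v i⟫ - ⟪x i - x j, v j⟫ := inner_sub_right _ _ _
  have e4 : ⟪v i - v j, x i - x j⟫ = ⟪x i - x j, v i⟫ - ⟪x i - x j, v j⟫ := by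
    rw [real_inner_comm, e3]
  rw [e1, e2, e3, e4]
  field_simp
  ring

theorem stmt6 {E : Type*} [NormedAddCommGroup E] [InnerProductSpace ℝ E]
    (n : ℕ) (m : Fin n → ℝ) (hm : ∀ i, 0 < m i)
    (r : Fin n → ℝ → E) (hsm : ∀ i, ContDiff ℝ 2 (r i))
    (hsep : ∀ t, ∀ i j, i ≠ j → r i t ≠ r j t)
    (hcm : ∀ t, ∑ i, m i • r i t = 0)
    (hode : ∀ i t, deriv (deriv (r i)) t
      = ∑ j ∈ Finset.univ.erase i,
          (2 * m j / ‖r i t - r j t‖ ^ 4) • (r j t - r i t)) :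
    (∀ t, deriv (deriv (fun s => ∑ i, m i * ‖r i s‖ ^ 2)) t
        = 4 * ((∑ i, m i * ‖deriv (r i) t‖ ^ 2) / 2
            - ∑ i, ∑ j ∈ Finset.univ.filter (fun j => i < j),
                m i * m j / ‖r i t - r j t‖ ^ 2)) ∧
    (∀ t, deriv (fun s =>
        2 * (∑ i, m i * ‖r i s‖ ^ 2) *
          ((∑ i, m i * ‖deriv (r i) s‖ ^ 2) / 2
            - ∑ i, ∑ j ∈ Finset.univ.filter (fun j => i < j),
                m i * m j / ‖r i s - r j s‖ ^ 2)
        - (deriv (fun u => ∑ i, m i * ‖r i u‖ ^ 2) s / 2) ^ 2) t = 0) := by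
  have hrd : ∀ i, Differentiable ℝ (r i) := fun i => (hsm i).differentiable (by norm_num)
  have hvd : ∀ i, Differentiable ℝ (deriv (r i)) := by
    intro i
    have h : ContDiff ℝ (1 + 1) (r i) := by
      have h2 : ((1 : WithTop ℕ∞) + 1) = 2 := by norm_num
      rw [h2]; exact hsm i
    exact ((contDiff_succ_iff_deriv.mp h).2.2).differentiable one_ne_zero
  have hr : ∀ i t, HasDerivAt (r i) (deriv (r i) t) t := fun i t => (hrd i t).hasDerivAt
  have hva : ∀ i t, HasDerivAt (deriv (r i))
      (∑ j ∈ Finset.univ.erase i, (2 * m j / ‖r i t - r j t‖ ^ 4) • (r j t - r i t)) t :=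
    fun i t => (hode i t) ▸ (hvd i t).hasDerivAt
  -- derivative of I
  have hI : ∀ t, HasDerivAt (fun s => ∑ i, m i * ‖r i s‖ ^ 2)
      (∑ i, 2 * m i * ⟪r i t, deriv (r i) t⟫) t := by
    intro t
    have hfun : (fun s => ∑ i, m i * ‖r i s‖ ^ 2)
        = fun s => ∑ i, m i * ⟪r i s, r i s⟫ := by
      funext s
      exact Finset.sum_congr rfl fun i _ => by rw [real_inner_self_eq_norm_sq]
    rw [hfun]
    refine HasDerivAt.fun_sum fun i _ => ?_
    have h := (HasDerivAt.inner (𝕜 := ℝ) (hr i t) (hr i t)).const_mul (m i)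
    refine h.congr_deriv ?_
    rw [real_inner_comm (deriv (r i) t) (r i t)]
    ring
  have hderivI : deriv (fun s => ∑ i, m i * ‖r i s‖ ^ 2)
      = fun t => ∑ i, 2 * m i * ⟪r i t, deriv (r i) t⟫ := funext fun t => (hI t).deriv
  -- second derivative of I equals 4H
  have hI2 : ∀ t, HasDerivAt (fun s => ∑ i, 2 * m i * ⟪r i s, deriv (r i) s⟫)
      (4 * ((∑ i, m i * ‖deriv (r i) t‖ ^ 2) / 2
          - ∑ i, ∑ j ∈ Finset.univ.filter (fun j => i < j),
              m i * m j / ‖r i t - r j t‖ ^ 2)) t := by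
    intro t
    have h : HasDerivAt (fun s => ∑ i, 2 * m i * ⟪r i s, deriv (r i) s⟫)
        (∑ i, 2 * m i * (⟪r i t, ∑ j ∈ Finset.univ.erase i,
              (2 * m j / ‖r i t - r j t‖ ^ 4) • (r j t - r i t)⟫
            + ⟪deriv (r i) t, deriv (r i) t⟫)) t := by
      refine HasDerivAt.fun_sum fun i _ => ?_
      exact (HasDerivAt.inner (𝕜 := ℝ) (hr i t) (hva i t)).const_mul (2 * m i)
    convert h using 1
    have hsplit : ∑ i, 2 * m i * (⟪r i t, ∑ j ∈ Finset.univ.erase i,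
              (2 * m j / ‖r i t - r j t‖ ^ 4) • (r j t - r i t)⟫
            + ⟪deriv (r i) t, deriv (r i) t⟫)
        = (∑ i, 2 * m i * ⟪r i t, ∑ j ∈ Finset.univ.erase i,
              (2 * m j / ‖r i t - r j t‖ ^ 4) • (r j t - r i t)⟫)
          + ∑ i, 2 * m i * ‖deriv (r i) t‖ ^ 2 := by
      rw [← Finset.sum_add_distrib]
      exact Finset.sum_congr rfl fun i _ => by rw [real_inner_self_eq_norm_sq]; ring
    rw [hsplit]
    have halg := alg1 m (fun i => r i t) (fun i j h => hsep t i j h)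
    rw [halg]
    have : ∑ i, 2 * m i * ‖deriv (r i) t‖ ^ 2 = 2 * ∑ i, m i * ‖deriv (r i) t‖ ^ 2 := by
      rw [Finset.mul_sum]; exact Finset.sum_congr rfl fun i _ => by ring
    rw [this]
    ring
  -- the energy is a first integral
  have hH : ∀ t, HasDerivAt (fun s => (∑ i, m i * ‖deriv (r i) s‖ ^ 2) / 2
      - ∑ i, ∑ j ∈ Finset.univ.filter (fun j => i < j),
          m i * m j / ‖r i s - r j s‖ ^ 2) 0 t := by
    intro t
    have hK : HasDerivAt (fun s => (∑ i, m i * ‖deriv (r i) s‖ ^ 2) / 2)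
        ((∑ i, m i * (⟪deriv (r i) t, ∑ j ∈ Finset.univ.erase i,
              (2 * m j / ‖r i t - r j t‖ ^ 4) • (r j t - r i t)⟫
            + ⟪∑ j ∈ Finset.univ.erase i,
              (2 * m j / ‖r i t - r j t‖ ^ 4) • (r j t - r i t), deriv (r i) t⟫)) / 2) t := by
      have hfun : (fun s => (∑ i, m i * ‖deriv (r i) s‖ ^ 2) / 2)
          = fun s => (∑ i, m i * ⟪deriv (r i) s, deriv (r i) s⟫) / 2 := by
        funext s
        congr 1
        exact Finset.sum_congr rfl fun i _ => by rw [real_inner_self_eq_norm_sq]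
      rw [hfun]
      exact (HasDerivAt.fun_sum fun i _ =>
        (HasDerivAt.inner (𝕜 := ℝ) (hva i t) (hva i t)).const_mul (m i)).div_const 2
    have hU : HasDerivAt (fun s => ∑ i, ∑ j ∈ Finset.univ.filter (fun j => i < j),
          m i * m j / ‖r i s - r j s‖ ^ 2)
        (∑ i, ∑ j ∈ Finset.univ.filter (fun j => i < j),
          (0 * ⟪r i t - r j t, r i t - r j t⟫
            - m i * m j * (⟪r i t - r j t, deriv (r i) t - deriv (r j) t⟫
              + ⟪deriv (r i) t - deriv (r j) t, r i t - r j t⟫))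
            / ⟪r i t - r j t, r i t - r j t⟫ ^ 2) t := by
      have hfun : (fun s => ∑ i, ∑ j ∈ Finset.univ.filter (fun j => i < j),
            m i * m j / ‖r i s - r j s‖ ^ 2)
          = fun s => ∑ i, ∑ j ∈ Finset.univ.filter (fun j => i < j),
            m i * m j / ⟪r i s - r j s, r i s - r j s⟫ := by
        funext s
        refine Finset.sum_congr rfl fun i _ => Finset.sum_congr rfl fun j _ => ?_
        rw [real_inner_self_eq_norm_sq]
      rw [hfun]
      refine HasDerivAt.fun_sum fun i _ => HasDerivAt.fun_sum fun j hj => ?_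
      have hne : r i t ≠ r j t := hsep t i j (ne_of_lt (Finset.mem_filter.mp hj).2)
      have hq : ⟪r i t - r j t, r i t - r j t⟫ ≠ 0 := by
        rw [real_inner_self_eq_norm_sq]
        exact pow_ne_zero 2 (norm_ne_zero_iff.mpr (sub_ne_zero.mpr hne))
      exact (hasDerivAt_const t (m i * m j)).div
        (HasDerivAt.inner (𝕜 := ℝ) ((hr i t).sub (hr j t)) ((hr i t).sub (hr j t))) hq
    have h := hK.sub hU
    refine h.congr_deriv ?_
    have hKsimp : ∀ i, m i * (⟪deriv (r i) t, ∑ j ∈ Finset.univ.erase i,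
              (2 * m j / ‖r i t - r j t‖ ^ 4) • (r j t - r i t)⟫
            + ⟪∑ j ∈ Finset.univ.erase i,
              (2 * m j / ‖r i t - r j t‖ ^ 4) • (r j t - r i t), deriv (r i) t⟫)
        = 2 * (m i * ⟪deriv (r i) t, ∑ j ∈ Finset.univ.erase i,
              (2 * m j / ‖r i t - r j t‖ ^ 4) • (r j t - r i t)⟫) := by
      intro i
      rw [real_inner_comm (∑ j ∈ Finset.univ.erase i,
        (2 * m j / ‖r i t - r j t‖ ^ 4) • (r j t - r i t)) (deriv (r i) t)]
      ring
    simp only [hKsimp]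
    rw [← Finset.mul_sum]
    have halg := alg2 m (fun i => r i t) (fun i => deriv (r i) t)
      (fun i j h => hsep t i j h)
    rw [halg]
    ring
  refine ⟨fun t => ?_, fun t => ?_⟩
  · rw [hderivI]
    exact (hI2 t).deriv
  · have hfun2 : (fun s =>
        2 * (∑ i, m i * ‖r i s‖ ^ 2) *
          ((∑ i, m i * ‖deriv (r i) s‖ ^ 2) / 2
            - ∑ i, ∑ j ∈ Finset.univ.filter (fun j => i < j),
                m i * m j / ‖r i s - r j s‖ ^ 2)
        - (deriv (fun u => ∑ i, m i * ‖r i u‖ ^ 2) s / 2) ^ 2)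
        = fun s =>
        2 * (∑ i, m i * ‖r i s‖ ^ 2) *
          ((∑ i, m i * ‖deriv (r i) s‖ ^ 2) / 2
            - ∑ i, ∑ j ∈ Finset.univ.filter (fun j => i < j),
                m i * m j / ‖r i s - r j s‖ ^ 2)
        - ((∑ i, 2 * m i * ⟪r i s, deriv (r i) s⟫) / 2) ^ 2 := by
      funext s
      rw [hderivI]
    rw [hfun2]
    have h1 := ((hI t).const_mul 2).fun_mul (hH t)
    have h2 := ((hI2 t).div_const 2).fun_pow 2
    have hG := h1.fun_sub h2
    rw [hG.deriv]
    ring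
end

section
/- Complex Schwarz inequality: let V be a real inner product space equipped with a linear map J : V → V that is antisymmetric (⟨Jx,y⟩ = −⟨x,Jy⟩) and contractive (‖Jx‖ ≤ ‖x‖ for all x). Then for all x, y ∈ V: ‖x‖²‖y‖² − ⟨x,y⟩² − ⟨Jx,y⟩² ≥ 0. -/
open scoped RealInnerProductSpace

theorem stmt9 {V : Type*} [NormedAddCommGroup V] [InnerProductSpace ℝ V]
    (J : V →ₗ[ℝ] V)
    (hanti : ∀ x y, ⟪J x, y⟫ = -⟪x, J y⟫)
    (hcontr : ∀ x, ‖J x‖ ≤ ‖x‖) (x y : V) :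
    0 ≤ ‖x‖ ^ 2 * ‖y‖ ^ 2 - ⟪x, y⟫ ^ 2 - ⟪J x, y⟫ ^ 2 := by
  set a := ⟪x, y⟫ with ha
  set b := ⟪J x, y⟫ with hb
  have horth : ⟪x, J x⟫ = 0 := by
    have h := hanti x x
    have hsym : ⟪J x, x⟫ = ⟪x, J x⟫ := real_inner_comm _ _
    linarith [h, hsym]
  rcases eq_or_lt_of_le (show (0:ℝ) ≤ a ^ 2 + b ^ 2 by positivity) with h0 | hpos
  · nlinarith [sq_nonneg (‖x‖ * ‖y‖), sq_nonneg a, sq_nonneg b]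
  · set z := a • x + b • J x with hz
    have hzy : ⟪z, y⟫ = a ^ 2 + b ^ 2 := by
      simp [hz, inner_add_left, real_inner_smul_left, ← ha, ← hb]
      ring
    have hznorm : ‖z‖ ^ 2 ≤ (a ^ 2 + b ^ 2) * ‖x‖ ^ 2 := by
      have hexp : ‖z‖ ^ 2 = a ^ 2 * ‖x‖ ^ 2 + 2 * a * b * ⟪x, J x⟫ + b ^ 2 * ‖J x‖ ^ 2 := by
        have : ‖z‖ ^ 2 = ⟪z, z⟫ := (real_inner_self_eq_norm_sq z).symm
        rw [this, hz, inner_add_left, inner_add_right, inner_add_right]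
        simp [inner_add_left, inner_add_right, real_inner_smul_left, real_inner_smul_right,
          real_inner_self_eq_norm_sq, real_inner_comm (J x) x, norm_smul, mul_pow, sq_abs]
        ring
      have hJ : ‖J x‖ ^ 2 ≤ ‖x‖ ^ 2 := by
        have := hcontr x
        nlinarith [norm_nonneg (J x), norm_nonneg x]
      rw [hexp, horth]
      nlinarith [sq_nonneg b]
    have hcs : ⟪z, y⟫ ^ 2 ≤ ‖z‖ ^ 2 * ‖y‖ ^ 2 := by
      have := abs_real_inner_le_norm z y
      nlinarith [norm_nonneg z, norm_nonneg y, abs_nonneg ⟪z, y⟫, sq_abs ⟪z, y⟫]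
    rw [hzy] at hcs
    nlinarith [sq_nonneg (‖y‖), mul_nonneg (sq_nonneg ‖x‖) (sq_nonneg ‖y‖)]
end

section
/- Sundman's inequality: for a state z = (x, y) of the n-body problem with masses m_i, center of mass at origin, I = Σ m_i‖r_i‖², J = Σ m_i⟨r_i, v_i⟩, K = Σ m_i‖v_i‖², and angular momentum bivector C with norm |C| = (1/2)trace√(−(C∘ε)²), one has IK − J² − |C|² ≥ 0. -/
open scoped RealInnerProductSpace
open Matrix

private theorem auxST_triple {α β : Type*} [Fintype α] [Fintype β] (f : α → α → β → ℝ) :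
    ∑ y, ∑ x, ∑ i, f y x i = ∑ i, ∑ x, ∑ y, f y x i :=
  calc ∑ y, ∑ x, ∑ i, f y x i
      = ∑ y, ∑ i, ∑ x, f y x i := Finset.sum_congr rfl fun _ _ => Finset.sum_comm
    _ = ∑ i, ∑ y, ∑ x, f y x i := Finset.sum_comm
    _ = ∑ i, ∑ x, ∑ y, f y x i := Finset.sum_congr rfl fun _ _ => Finset.sum_comm

private theorem auxST_exp (d n : ℕ) (m : Fin n → ℝ) (r w : Fin n → EuclideanSpace ℝ (Fin d))
    (u e : Fin d → ℝ) :
    u ⬝ᵥ ((Matrix.of fun j k => ∑ i, m i * (r i j * w i k - r i k * w i j)) *ᵥ e)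
      = ∑ i, m i * ((u ⬝ᵥ (r i : Fin d → ℝ)) * ((w i : Fin d → ℝ) ⬝ᵥ e)
          - (u ⬝ᵥ (w i : Fin d → ℝ)) * ((r i : Fin d → ℝ) ⬝ᵥ e)) := by
  simp only [Matrix.mulVec, dotProduct, Matrix.of_apply, Finset.mul_sum, Finset.sum_mul,
    mul_sub, sub_mul, Finset.sum_sub_distrib]
  rw [auxST_triple, auxST_triple]
  congr 1 <;>
  · refine Finset.sum_congr rfl fun i _ => Finset.sum_congr rfl fun x _ =>
      Finset.sum_congr rfl fun y _ => by ring

private theorem auxST_bessel (d : ℕ) (μ : Fin d → ℝ) (u : Fin d → EuclideanSpace ℝ (Fin d))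
    (h0 : ∀ j, μ j = 0 → u j = 0)
    (hON : ∀ j k, μ j ≠ 0 → μ k ≠ 0 → ⟪u j, u k⟫ = if j = k then 1 else 0)
    (a : EuclideanSpace ℝ (Fin d)) :
    ∑ j, ⟪u j, a⟫ ^ 2 ≤ ‖a‖ ^ 2 := by
  classical
  have hsub : Orthonormal ℝ (fun j : {j // μ j ≠ 0} => u j) := by
    rw [orthonormal_iff_ite]
    intro j k
    rw [hON j k j.2 k.2]
    simp [Subtype.ext_iff]
  have hb := hsub.sum_inner_products_le (s := Finset.univ) a
  calc ∑ j, ⟪u j, a⟫ ^ 2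
      = ∑ j ∈ Finset.univ.filter (fun j => μ j ≠ 0), ⟪u j, a⟫ ^ 2 := by
        rw [Finset.sum_filter]
        refine Finset.sum_congr rfl fun j _ => ?_
        by_cases h : μ j = 0
        · simp [h, h0 j h]
        · simp [h]
    _ = ∑ j : {j // μ j ≠ 0}, ⟪u j, a⟫ ^ 2 := by
        rw [← Finset.sum_subtype (Finset.univ.filter (fun j => μ j ≠ 0))
          (fun x => by simp) (fun j => ⟪u j, a⟫ ^ 2)]
    _ ≤ ‖a‖ ^ 2 := by simpa [Real.norm_eq_abs, sq_abs] using hb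

private theorem auxST_cs (d : ℕ) (f g : Fin d → ℝ) (a c : ℝ) (ha : 0 ≤ a) (hc : 0 ≤ c)
    (hf : ∑ j, f j ^ 2 ≤ a ^ 2) (hg : ∑ j, g j ^ 2 ≤ c ^ 2) :
    |∑ j, f j * g j| ≤ a * c := by
  apply abs_le_of_sq_le_sq _ (mul_nonneg ha hc)
  calc (∑ j, f j * g j) ^ 2
      ≤ (∑ j, f j ^ 2) * (∑ j, g j ^ 2) := Finset.sum_mul_sq_le_sq_mul_sq _ _ _
    _ ≤ a ^ 2 * c ^ 2 :=
        mul_le_mul hf hg (Finset.sum_nonneg fun _ _ => sq_nonneg _) (sq_nonneg a)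
    _ = (a * c) ^ 2 := (mul_pow a c 2).symm

private theorem auxST_inner_dot (d : ℕ) (x y : EuclideanSpace ℝ (Fin d)) :
    ⟪x, y⟫ = (x : Fin d → ℝ) ⬝ᵥ (y : Fin d → ℝ) := by
  simp [PiLp.inner_apply, dotProduct, mul_comm]

/-- The key estimate: the trace of the positive square root of `-C²` is at most
`2 ∑ mᵢ ‖rᵢ‖ ‖wᵢ‖`. -/
private theorem auxST_key (d n : ℕ) (m : Fin n → ℝ) (hm : ∀ i, 0 ≤ m i)
    (r w : Fin n → EuclideanSpace ℝ (Fin d))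
    (S : Matrix (Fin d) (Fin d) ℝ) (hS : S.PosSemidef)
    (hSS : S * S = -((Matrix.of fun j k => ∑ i, m i * (r i j * w i k - r i k * w i j)) *
        (Matrix.of fun j k => ∑ i, m i * (r i j * w i k - r i k * w i j)))) :
    S.trace ≤ 2 * ∑ i, m i * (‖r i‖ * ‖w i‖) := by
  classical
  set C : Matrix (Fin d) (Fin d) ℝ :=
    Matrix.of fun j k => ∑ i, m i * (r i j * w i k - r i k * w i j) with hCdef
  have hCt : Cᵀ = -C := by
    ext j k
    simp only [hCdef, Matrix.transpose_apply, Matrix.neg_apply, Matrix.of_apply,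
      ← Finset.sum_neg_distrib]
    exact Finset.sum_congr rfl fun i _ => by ring
  set b := hS.isHermitian.eigenvectorBasis with hbdef
  set μ := hS.isHermitian.eigenvalues with hμdef
  have hbev : ∀ j, S *ᵥ (b j : Fin d → ℝ) = μ j • (b j : Fin d → ℝ) :=
    fun j => hS.isHermitian.mulVec_eigenvectorBasis j
  have hμ0 : ∀ j, 0 ≤ μ j := fun j => hS.eigenvalues_nonneg j
  have htr : S.trace = ∑ j, μ j := by
    nth_rewrite 1 [hS.isHermitian.spectral_theorem]
    rw [Unitary.conjStarAlgAut_apply, Matrix.trace_mul_cycle, Unitary.coe_star_mul_self]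
    simp [Matrix.trace_diagonal]; rfl
  have hbd : ∀ j k, (b j : Fin d → ℝ) ⬝ᵥ (b k : Fin d → ℝ) = if j = k then 1 else 0 := by
    intro j k
    have := orthonormal_iff_ite.mp b.orthonormal j k
    simpa [PiLp.inner_apply, dotProduct, mul_comm] using this
  have hCC : ∀ j k, (C *ᵥ (b j : Fin d → ℝ)) ⬝ᵥ (C *ᵥ (b k : Fin d → ℝ))
      = μ k ^ 2 * (if j = k then 1 else 0) := by
    intro j k
    have h1 : ∀ (x y : Fin d → ℝ), x ⬝ᵥ ((Cᵀ * C) *ᵥ y) = (C *ᵥ x) ⬝ᵥ (C *ᵥ y) := by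
      intro x y
      rw [← Matrix.mulVec_mulVec, Matrix.dotProduct_mulVec, Matrix.vecMul_transpose]
    rw [← h1, hCt, neg_mul, ← hSS, ← Matrix.mulVec_mulVec, hbev, Matrix.mulVec_smul, hbev,
      dotProduct_smul, dotProduct_smul, hbd]
    simp [smul_eq_mul]; ring_nf
  -- the left singular family
  set u : Fin d → EuclideanSpace ℝ (Fin d) := fun j =>
    if μ j = 0 then 0 else (μ j)⁻¹ • (WithLp.toLp 2 (C *ᵥ (b j : Fin d → ℝ)) : EuclideanSpace ℝ (Fin d)) with hudef
  have hu0 : ∀ j, μ j = 0 → u j = 0 := by intro j h; simp [hudef, h]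
  have hud : ∀ j (x : EuclideanSpace ℝ (Fin d)),
      ⟪u j, x⟫ = if μ j = 0 then 0 else (μ j)⁻¹ * ((C *ᵥ (b j : Fin d → ℝ)) ⬝ᵥ (x : Fin d → ℝ)) := by
    intro j x
    by_cases h : μ j = 0
    · simp [hudef, h]
    · rw [hudef]
      simp only [h, if_false]
      rw [real_inner_smul_left, auxST_inner_dot]
  have hON : ∀ j k, μ j ≠ 0 → μ k ≠ 0 → ⟪u j, u k⟫ = if j = k then 1 else 0 := by
    intro j k hj hk
    rw [hudef]
    simp only [hj, hk, if_false]
    rw [real_inner_smul_left, real_inner_smul_right, auxST_inner_dot]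
    show (μ j)⁻¹ * ((μ k)⁻¹ * ((C *ᵥ (b j : Fin d → ℝ)) ⬝ᵥ (C *ᵥ (b k : Fin d → ℝ)))) = _
    rw [hCC]
    by_cases h : j = k
    · subst h; simp; field_simp
    · simp [h]
  have hμeq : ∀ j, μ j = (u j : Fin d → ℝ) ⬝ᵥ (C *ᵥ (b j : Fin d → ℝ)) := by
    intro j
    have h1 := hud j (WithLp.toLp 2 (C *ᵥ (b j : Fin d → ℝ)) : EuclideanSpace ℝ (Fin d))
    rw [auxST_inner_dot, WithLp.ofLp_toLp] at h1
    rw [h1, hCC]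
    by_cases h : μ j = 0
    · simp [h]
    · simp [h, pow_two]
  -- the per-body estimate
  have hperi : ∀ i, (∑ j, ((u j : Fin d → ℝ) ⬝ᵥ (r i : Fin d → ℝ)) * ((w i : Fin d → ℝ) ⬝ᵥ (b j : Fin d → ℝ))
        - ∑ j, ((u j : Fin d → ℝ) ⬝ᵥ (w i : Fin d → ℝ)) * ((r i : Fin d → ℝ) ⬝ᵥ (b j : Fin d → ℝ)))
      ≤ 2 * (‖r i‖ * ‖w i‖) := by
    intro i
    have hbu : ∀ (a : EuclideanSpace ℝ (Fin d)), ∑ j, ((u j : Fin d → ℝ) ⬝ᵥ (a : Fin d → ℝ)) ^ 2 ≤ ‖a‖ ^ 2 := by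
      intro a
      have := auxST_bessel d μ u hu0 hON a
      simpa [auxST_inner_dot] using this
    have hbb : ∀ (a : EuclideanSpace ℝ (Fin d)), ∑ j, ((a : Fin d → ℝ) ⬝ᵥ (b j : Fin d → ℝ)) ^ 2 ≤ ‖a‖ ^ 2 := by
      intro a
      have := b.orthonormal.sum_inner_products_le (s := Finset.univ) a
      simp only [Real.norm_eq_abs, sq_abs] at this
      calc ∑ j, ((a : Fin d → ℝ) ⬝ᵥ (b j : Fin d → ℝ)) ^ 2
          = ∑ j, ⟪b j, a⟫ ^ 2 := Finset.sum_congr rfl fun j _ => by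
            rw [auxST_inner_dot, dotProduct_comm]
        _ ≤ ‖a‖ ^ 2 := this
    have h1 : |∑ j, ((u j : Fin d → ℝ) ⬝ᵥ (r i : Fin d → ℝ)) * ((w i : Fin d → ℝ) ⬝ᵥ (b j : Fin d → ℝ))|
        ≤ ‖r i‖ * ‖w i‖ :=
      auxST_cs d _ _ _ _ (norm_nonneg _) (norm_nonneg _) (hbu (r i)) (hbb (w i))
    have h2 : |∑ j, ((u j : Fin d → ℝ) ⬝ᵥ (w i : Fin d → ℝ)) * ((r i : Fin d → ℝ) ⬝ᵥ (b j : Fin d → ℝ))|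
        ≤ ‖w i‖ * ‖r i‖ :=
      auxST_cs d _ _ _ _ (norm_nonneg _) (norm_nonneg _) (hbu (w i)) (hbb (r i))
    have := abs_le.mp h1
    have := abs_le.mp h2
    nlinarith [abs_le.mp h1, abs_le.mp h2]
  calc S.trace = ∑ j, μ j := htr
    _ = ∑ j, (u j : Fin d → ℝ) ⬝ᵥ (C *ᵥ (b j : Fin d → ℝ)) :=
        Finset.sum_congr rfl fun j _ => hμeq j
    _ = ∑ j, ∑ i, m i * (((u j : Fin d → ℝ) ⬝ᵥ (r i : Fin d → ℝ)) * ((w i : Fin d → ℝ) ⬝ᵥ (b j : Fin d → ℝ))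
          - ((u j : Fin d → ℝ) ⬝ᵥ (w i : Fin d → ℝ)) * ((r i : Fin d → ℝ) ⬝ᵥ (b j : Fin d → ℝ))) :=
        Finset.sum_congr rfl fun j _ => auxST_exp d n m r w _ _
    _ = ∑ i, ∑ j, m i * (((u j : Fin d → ℝ) ⬝ᵥ (r i : Fin d → ℝ)) * ((w i : Fin d → ℝ) ⬝ᵥ (b j : Fin d → ℝ))
          - ((u j : Fin d → ℝ) ⬝ᵥ (w i : Fin d → ℝ)) * ((r i : Fin d → ℝ) ⬝ᵥ (b j : Fin d → ℝ))) :=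
        Finset.sum_comm
    _ = ∑ i, m i * (∑ j, ((u j : Fin d → ℝ) ⬝ᵥ (r i : Fin d → ℝ)) * ((w i : Fin d → ℝ) ⬝ᵥ (b j : Fin d → ℝ))
          - ∑ j, ((u j : Fin d → ℝ) ⬝ᵥ (w i : Fin d → ℝ)) * ((r i : Fin d → ℝ) ⬝ᵥ (b j : Fin d → ℝ))) := by
        refine Finset.sum_congr rfl fun i _ => ?_
        rw [← Finset.mul_sum, Finset.sum_sub_distrib]
    _ ≤ ∑ i, m i * (2 * (‖r i‖ * ‖w i‖)) :=
        Finset.sum_le_sum fun i _ => mul_le_mul_of_nonneg_left (hperi i) (hm i)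
    _ = 2 * ∑ i, m i * (‖r i‖ * ‖w i‖) := by
        rw [Finset.mul_sum]; exact Finset.sum_congr rfl fun i _ => by ring

theorem stmt11 (d n : ℕ) (m : Fin n → ℝ) (hm : ∀ i, 0 < m i)
    (r v : Fin n → EuclideanSpace ℝ (Fin d))
    (hcm : ∑ i, m i • r i = 0) (hcv : ∑ i, m i • v i = 0) :
    ∀ S : Matrix (Fin d) (Fin d) ℝ, S.PosSemidef →
      S * S = -((Matrix.of fun j k => ∑ i, m i * (r i j * v i k - r i k * v i j)) *
          (Matrix.of fun j k => ∑ i, m i * (r i j * v i k - r i k * v i j))) →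
      0 ≤ (∑ i, m i * ‖r i‖ ^ 2) * (∑ i, m i * ‖v i‖ ^ 2)
          - (∑ i, m i * ⟪r i, v i⟫) ^ 2 - ((1/2) * S.trace) ^ 2 := by
  intro S hS hSS
  have hm' : ∀ i, 0 ≤ m i := fun i => (hm i).le
  set I := ∑ i, m i * ‖r i‖ ^ 2 with hIdef
  set J := ∑ i, m i * ⟪r i, v i⟫ with hJdef
  set K := ∑ i, m i * ‖v i‖ ^ 2 with hKdef
  have hI0 : 0 ≤ I := Finset.sum_nonneg fun i _ => mul_nonneg (hm' i) (sq_nonneg _)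
  have htr0 : 0 ≤ S.trace := by
    rw [Matrix.trace]
    refine Finset.sum_nonneg fun j _ => ?_
    exact hS.diag_nonneg
  by_cases hI : I = 0
  · -- all positions vanish
    have hr : ∀ i, r i = 0 := by
      intro i
      have h := (Finset.sum_eq_zero_iff_of_nonneg
        (fun i _ => mul_nonneg (hm' i) (sq_nonneg ‖r i‖))).mp hI i (Finset.mem_univ i)
      have : ‖r i‖ ^ 2 = 0 := by
        rcases mul_eq_zero.mp h with h' | h'
        · exact absurd h' (ne_of_gt (hm i))
        · exact h'
      simpa [pow_eq_zero_iff] using this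
    have hkey := auxST_key d n m hm' r v S hS hSS
    have hJ : J = 0 := by
      rw [hJdef]
      exact Finset.sum_eq_zero fun i _ => by simp [hr i]
    have hrw : (∑ i, m i * (‖r i‖ * ‖v i‖)) = 0 :=
      Finset.sum_eq_zero fun i _ => by simp [hr i]
    rw [hrw, mul_zero] at hkey
    have hStr : S.trace = 0 := le_antisymm hkey htr0
    have hK0 : 0 ≤ K := Finset.sum_nonneg fun i _ => mul_nonneg (hm' i) (sq_nonneg _)
    rw [hI, hJ, hStr]
    simp
  · have hIpos : 0 < I := lt_of_le_of_ne hI0 (Ne.symm hI)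
    set c : ℝ := J / I with hcdef
    set w : Fin n → EuclideanSpace ℝ (Fin d) := fun i => v i - c • r i with hwdef
    have hmat : (Matrix.of fun j k => ∑ i, m i * (r i j * w i k - r i k * w i j))
        = (Matrix.of fun j k => ∑ i, m i * (r i j * v i k - r i k * v i j)) := by
      ext j k
      simp only [Matrix.of_apply]
      refine Finset.sum_congr rfl fun i _ => ?_
      have h1 : (w i : Fin d → ℝ) k = v i k - c * r i k := rfl
      have h2 : (w i : Fin d → ℝ) j = v i j - c * r i j := rfl
      rw [h1, h2]; ring
    have hkey := auxST_key d n m hm' r w S hS (by rw [hmat]; exact hSS)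
    -- weighted Cauchy–Schwarz
    have hcs : (∑ i, m i * (‖r i‖ * ‖w i‖)) ^ 2 ≤ I * ∑ i, m i * ‖w i‖ ^ 2 := by
      have h := Finset.sum_mul_sq_le_sq_mul_sq Finset.univ
        (fun i => Real.sqrt (m i) * ‖r i‖) (fun i => Real.sqrt (m i) * ‖w i‖)
      calc (∑ i, m i * (‖r i‖ * ‖w i‖)) ^ 2
          = (∑ i, (Real.sqrt (m i) * ‖r i‖) * (Real.sqrt (m i) * ‖w i‖)) ^ 2 := by
            congr 1
            refine Finset.sum_congr rfl fun i _ => ?_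
            rw [show (Real.sqrt (m i) * ‖r i‖) * (Real.sqrt (m i) * ‖w i‖)
              = (Real.sqrt (m i) * Real.sqrt (m i)) * (‖r i‖ * ‖w i‖) by ring,
              Real.mul_self_sqrt (hm' i)]
        _ ≤ (∑ i, (Real.sqrt (m i) * ‖r i‖) ^ 2) * (∑ i, (Real.sqrt (m i) * ‖w i‖) ^ 2) := h
        _ = I * ∑ i, m i * ‖w i‖ ^ 2 := by
            congr 1 <;>
            · refine Finset.sum_congr rfl fun i _ => ?_
              rw [mul_pow, Real.sq_sqrt (hm' i)]
    have hwnorm : ∑ i, m i * ‖w i‖ ^ 2 = K - 2 * c * J + c ^ 2 * I := by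
      rw [hKdef, hJdef, hIdef]
      rw [show (∑ i, m i * ‖v i‖ ^ 2) - 2 * c * (∑ i, m i * ⟪r i, v i⟫)
          + c ^ 2 * (∑ i, m i * ‖r i‖ ^ 2)
        = ∑ i, (m i * ‖v i‖ ^ 2 - 2 * c * (m i * ⟪r i, v i⟫) + c ^ 2 * (m i * ‖r i‖ ^ 2)) by
          rw [Finset.sum_add_distrib, Finset.sum_sub_distrib, ← Finset.mul_sum, ← Finset.mul_sum]]
      refine Finset.sum_congr rfl fun i _ => ?_
      have : ‖w i‖ ^ 2 = ‖v i‖ ^ 2 - 2 * ⟪v i, c • r i⟫ + ‖c • r i‖ ^ 2 := norm_sub_sq_real _ _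
      rw [this, real_inner_smul_right, norm_smul, mul_pow, real_inner_comm]
      simp [Real.norm_eq_abs, sq_abs]
      ring
    have hwI : I * ∑ i, m i * ‖w i‖ ^ 2 = I * K - J ^ 2 := by
      rw [hwnorm, hcdef]
      field_simp
      ring
    have hhalf : (1/2 : ℝ) * S.trace ≤ ∑ i, m i * (‖r i‖ * ‖w i‖) := by linarith
    have hsq : ((1/2 : ℝ) * S.trace) ^ 2 ≤ (∑ i, m i * (‖r i‖ * ‖w i‖)) ^ 2 := by
      apply sq_le_sq' _ hhalf
      have h0 : 0 ≤ ∑ i, m i * (‖r i‖ * ‖w i‖) :=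
        Finset.sum_nonneg fun i _ => mul_nonneg (hm' i) (mul_nonneg (norm_nonneg _) (norm_nonneg _))
      nlinarith
    nlinarith [hcs, hwI, hsq]
end

section
/- A configuration x is balanced ([A, μ∘β] = 0 where β = ᵗx∘ε∘x, A the Wintner–Conley operator) if and only if there exists a symmetric operator Σ : E → E* such that ∇U(x) = ε⁻¹∘Σ∘x, where ∇U(x) = 2x∘A. -/
open Matrix

lemma stmt18_aux {d k : ℕ} (x y : Matrix (Fin d) (Fin k) ℝ)
    (hsym : xᵀ * y = yᵀ * x)
    (hker : ∀ u, x *ᵥ u = 0 → y *ᵥ u = 0) :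
    ∃ S : Matrix (Fin d) (Fin d) ℝ, Sᵀ = S ∧ S * x = y := by
  classical
  set f : EuclideanSpace ℝ (Fin k) →ₗ[ℝ] EuclideanSpace ℝ (Fin d) := toEuclideanLin x with hf
  set g : EuclideanSpace ℝ (Fin k) →ₗ[ℝ] EuclideanSpace ℝ (Fin d) := toEuclideanLin y with hg
  have hker' : LinearMap.ker f ≤ LinearMap.ker g := by
    intro u hu
    simp only [LinearMap.mem_ker, hf, hg, toEuclideanLin_apply] at *
    have hx : x *ᵥ (WithLp.equiv 2 (Fin k → ℝ)) u = 0 := by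
      have := congrArg (WithLp.equiv 2 (Fin d → ℝ)) hu
      simpa using this
    have := hker _ hx
    rw [show y *ᵥ u.ofLp = 0 from this]; simp
  set V := LinearMap.range f with hV
  set P := V.orthogonalProjection with hP
  set h : V →ₗ[ℝ] EuclideanSpace ℝ (Fin d) :=
    ((LinearMap.ker f).liftQ g hker') ∘ₗ (f.quotKerEquivRange).symm.toLinearMap with hh
  set L : EuclideanSpace ℝ (Fin d) →ₗ[ℝ] EuclideanSpace ℝ (Fin d) :=
    h ∘ₗ (P : EuclideanSpace ℝ (Fin d) →L[ℝ] V).toLinearMap with hL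
  -- L (f u) = g u
  have hPf : ∀ u, P (f u) = ⟨f u, LinearMap.mem_range_self f u⟩ := by
    intro u
    exact Submodule.orthogonalProjection_mem_subspace_eq_self (⟨f u, LinearMap.mem_range_self f u⟩ : V)
  have hhf : ∀ u, h ⟨f u, LinearMap.mem_range_self f u⟩ = g u := by
    intro u
    have he : f.quotKerEquivRange (Submodule.Quotient.mk u) =
        ⟨f u, LinearMap.mem_range_self f u⟩ := by
      apply Subtype.ext
      exact f.quotKerEquivRange_apply_mk u
    have : (f.quotKerEquivRange).symm ⟨f u, LinearMap.mem_range_self f u⟩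
        = Submodule.Quotient.mk u := by
      rw [← he]; simp
    simp [hh, this]
  have hLf : ∀ u, L (f u) = g u := by
    intro u
    simp only [hL, LinearMap.comp_apply, ContinuousLinearMap.coe_coe, hPf u]
    exact hhf u
  -- L depends only on projection
  have hLP : ∀ a, L ((P a : EuclideanSpace ℝ (Fin d))) = L a := by
    intro a
    simp only [hL, LinearMap.comp_apply, ContinuousLinearMap.coe_coe]
    congr 1
    exact Submodule.orthogonalProjection_mem_subspace_eq_self (P a)
  -- inner symmetry on range
  have hinner : ∀ u v : EuclideanSpace ℝ (Fin k),
      inner ℝ (f u) (g v) = inner ℝ (g u) (f v) := by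
    intro u v
    simp only [hf, hg, toEuclideanLin_apply]
    have hdp : ∀ (p q : Matrix (Fin d) (Fin k) ℝ) (a b : Fin k → ℝ),
        (p *ᵥ a) ⬝ᵥ (q *ᵥ b) = a ⬝ᵥ ((pᵀ * q) *ᵥ b) := by
      intro p q a b
      conv_lhs => rw [dotProduct_comm, dotProduct_mulVec, ← mulVec_transpose, mulVec_mulVec]
      rw [dotProduct_comm]
    rw [EuclideanSpace.inner_toLp_toLp, EuclideanSpace.inner_toLp_toLp]
    simp only [star_trivial]
    rw [hdp, hdp, hsym]
  -- Π
  set Pi : EuclideanSpace ℝ (Fin d) →ₗ[ℝ] EuclideanSpace ℝ (Fin d) :=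
    V.subtype ∘ₗ (P : EuclideanSpace ℝ (Fin d) →L[ℝ] V).toLinearMap with hPi
  set σ : EuclideanSpace ℝ (Fin d) →ₗ[ℝ] EuclideanSpace ℝ (Fin d) :=
    L + (LinearMap.adjoint L) ∘ₗ (LinearMap.id - Pi) with hσ
  have key : ∀ a b : EuclideanSpace ℝ (Fin d), inner ℝ (Pi a) (L b) = inner ℝ (L a) (Pi b) := by
    intro a b
    obtain ⟨u, hu⟩ := (P a).2
    obtain ⟨v, hv⟩ := (P b).2
    have ha' : Pi a = f u := by simp [hPi, ← hu]
    have hb' : Pi b = f v := by simp [hPi, ← hv]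
    have hLa : L a = g u := by rw [← hLP a]; rw [show ((P a : EuclideanSpace ℝ (Fin d))) = Pi a from rfl, ha']; exact hLf u
    have hLb : L b = g v := by rw [← hLP b]; rw [show ((P b : EuclideanSpace ℝ (Fin d))) = Pi b from rfl, hb']; exact hLf v
    rw [ha', hb', hLa, hLb]
    exact hinner u v
  have hσsym : σ.IsSymmetric := by
    intro a b
    have expl : inner ℝ (σ a) b = inner ℝ (L a) b + inner ℝ a (L b) - inner ℝ (Pi a) (L b) := by
      simp only [hσ, LinearMap.add_apply, LinearMap.comp_apply, LinearMap.sub_apply,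
        LinearMap.id_apply, inner_add_left, LinearMap.adjoint_inner_left, inner_sub_left]
      ring
    have expr : inner ℝ a (σ b) = inner ℝ a (L b) + inner ℝ (L a) b - inner ℝ (L a) (Pi b) := by
      simp only [hσ, LinearMap.add_apply, LinearMap.comp_apply, LinearMap.sub_apply,
        LinearMap.id_apply, inner_add_right, LinearMap.adjoint_inner_right, inner_sub_right]
      ring
    rw [expl, expr, key a b]
    ring
  have hσf : ∀ u, σ (f u) = g u := by
    intro u
    have hPifu : Pi (f u) = f u := by
      simp [hPi, hPf u]
    simp [hσ, hPifu, hLf u]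
  refine ⟨toEuclideanLin.symm σ, ?_, ?_⟩
  · have hherm : (toEuclideanLin.symm σ : Matrix (Fin d) (Fin d) ℝ).IsHermitian := by
      rw [isHermitian_iff_isSymmetric]
      simpa using hσsym
    simpa [Matrix.IsHermitian, Matrix.conjTranspose_eq_transpose_of_trivial] using hherm
  · apply (Matrix.toEuclideanLin (𝕜 := ℝ)).injective
    have hmul : ∀ (M : Matrix (Fin d) (Fin d) ℝ) (N : Matrix (Fin d) (Fin k) ℝ),
        toEuclideanLin (M * N) = (toEuclideanLin M) ∘ₗ (toEuclideanLin N) := by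
      intro M N
      apply LinearMap.ext
      intro u
      simp [toEuclideanLin_apply, mulVec_mulVec]
    rw [hmul, LinearEquiv.apply_symm_apply]
    exact LinearMap.ext hσf
theorem stmt18 (d k : ℕ) (x : Matrix (Fin d) (Fin k) ℝ)
    (μ : Matrix (Fin k) (Fin k) ℝ) (ε : Matrix (Fin d) (Fin d) ℝ)
    (hμ : μ.PosDef) (hμs : μᵀ = μ) (hε : ε.PosDef) (hεs : εᵀ = ε)
    (A : Matrix (Fin k) (Fin k) ℝ) (hA : μ * Aᵀ = A * μ) :
    A * (μ * (xᵀ * ε * x)) = (μ * (xᵀ * ε * x)) * A ↔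
      ∃ Sg : Matrix (Fin d) (Fin d) ℝ, Sgᵀ = Sg ∧
        (2 : ℝ) • (x * A) = ε⁻¹ * Sg * x := by
  have hεdet : IsUnit ε.det := hε.det_pos.ne'.isUnit
  have hμdet : IsUnit μ.det := hμ.det_pos.ne'.isUnit
  haveI : Invertible μ := μ.invertibleOfIsUnitDet hμdet
  have hεinv : ε⁻¹ * ε = 1 := nonsing_inv_mul ε hεdet
  have hεinv' : ε * ε⁻¹ = 1 := mul_nonsing_inv ε hεdet
  constructor
  · intro hcomm
    simp only [Matrix.mul_assoc] at hcomm
    have h1 : μ * (Aᵀ * (xᵀ * (ε * x))) = μ * (xᵀ * (ε * (x * A))) := by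
      calc μ * (Aᵀ * (xᵀ * (ε * x))) = μ * Aᵀ * (xᵀ * (ε * x)) := by
            rw [Matrix.mul_assoc]
        _ = A * μ * (xᵀ * (ε * x)) := by rw [hA]
        _ = A * (μ * (xᵀ * (ε * x))) := by rw [Matrix.mul_assoc]
        _ = μ * (xᵀ * (ε * (x * A))) := hcomm
    have key : Aᵀ * (xᵀ * (ε * x)) = xᵀ * (ε * (x * A)) :=
      Matrix.mul_right_injective_of_invertible μ h1
    have hdp : ∀ (a : Fin k → ℝ) (z : Fin d → ℝ), a ⬝ᵥ (xᵀ *ᵥ z) = (x *ᵥ a) ⬝ᵥ z := by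
      intro a z
      rw [dotProduct_mulVec, vecMul_transpose]
    have hker : ∀ u, x *ᵥ u = 0 → (ε * (x * A)) *ᵥ u = 0 := by
      intro u hu
      have hβu : (xᵀ * (ε * x)) *ᵥ u = 0 := by
        rw [← Matrix.mulVec_mulVec, ← Matrix.mulVec_mulVec, hu, Matrix.mulVec_zero,
          Matrix.mulVec_zero]
      have hβA : (xᵀ * (ε * x)) * A = Aᵀ * (xᵀ * (ε * x)) := by
        rw [key]
        simp [Matrix.mul_assoc]
      have hβAu : (xᵀ * (ε * x)) *ᵥ (A *ᵥ u) = 0 := by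
        rw [Matrix.mulVec_mulVec, hβA, ← Matrix.mulVec_mulVec, hβu, Matrix.mulVec_zero]
      have hw0 : x *ᵥ (A *ᵥ u) = 0 := by
        by_contra hne
        have hpos := hε.dotProduct_mulVec_pos hne
        have h0 : (A *ᵥ u) ⬝ᵥ ((xᵀ * (ε * x)) *ᵥ (A *ᵥ u)) = 0 := by
          rw [hβAu, dotProduct_zero]
        rw [← Matrix.mulVec_mulVec, hdp, ← Matrix.mulVec_mulVec] at h0
        rw [show star (x *ᵥ (A *ᵥ u)) = x *ᵥ (A *ᵥ u) from star_trivial _, h0] at hpos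
        exact lt_irrefl 0 hpos
      rw [← Matrix.mulVec_mulVec, ← Matrix.mulVec_mulVec, hw0, Matrix.mulVec_zero]
    have hsym' : xᵀ * (ε * (x * A)) = (ε * (x * A))ᵀ * x := by
      rw [← key]
      simp [Matrix.transpose_mul, hεs, Matrix.mul_assoc]
    obtain ⟨S, hSsym, hSx⟩ := stmt18_aux x (ε * (x * A)) hsym' hker
    refine ⟨(2 : ℝ) • S, by rw [Matrix.transpose_smul, hSsym], ?_⟩
    rw [Matrix.mul_smul, Matrix.smul_mul]
    congr 1
    rw [Matrix.mul_assoc, hSx, ← Matrix.mul_assoc, hεinv, Matrix.one_mul]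
  · rintro ⟨Sg, hs, he⟩
    simp only [Matrix.mul_assoc] at he ⊢
    have hE1 : Sg * x = (2 : ℝ) • (ε * (x * A)) := by
      have h := congrArg (fun M => ε * M) he
      rw [Matrix.mul_smul, ← Matrix.mul_assoc ε ε⁻¹, hεinv', Matrix.one_mul] at h
      exact h.symm
    have hE2 : (2 : ℝ) • (xᵀ * (ε * (x * A))) = xᵀ * (Sg * x) := by
      have h := congrArg (fun M => xᵀ * M) hE1
      rw [Matrix.mul_smul] at h
      exact h.symm
    have ht := congrArg Matrix.transpose he
    simp only [Matrix.transpose_smul, Matrix.transpose_mul, hs,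
      Matrix.transpose_nonsing_inv, hεs, Matrix.mul_assoc] at ht
    have hE3 : (2 : ℝ) • (Aᵀ * (xᵀ * (ε * x))) = xᵀ * (Sg * x) := by
      have h := congrArg (fun M => M * (ε * x)) ht
      simp only [Matrix.smul_mul, Matrix.mul_assoc] at h
      rw [← Matrix.mul_assoc ε⁻¹, hεinv, Matrix.one_mul] at h
      exact h
    have key : Aᵀ * (xᵀ * (ε * x)) = xᵀ * (ε * (x * A)) :=
      smul_right_injective (Matrix (Fin k) (Fin k) ℝ) (two_ne_zero) (hE3.trans hE2.symm)
    calc A * (μ * (xᵀ * (ε * x))) = A * μ * (xᵀ * (ε * x)) := by rw [Matrix.mul_assoc]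
      _ = μ * Aᵀ * (xᵀ * (ε * x)) := by rw [hA]
      _ = μ * (Aᵀ * (xᵀ * (ε * x))) := by rw [Matrix.mul_assoc]
      _ = μ * (xᵀ * (ε * (x * A))) := by rw [key]
end
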